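/- Δ formula (Lemma A.4 combination): let y ∈ (0,1), c > 0, and a real with a ≠ 1, a+c-1 ≠ 0, a-1-ay ≠ 0, -1+2a+c+a²(y-1) ≠ 0. Set λ = a(a-1+c)/(a-1-ay), s(λ) = (a(y-1)+1)/((a-1)(a+c-1)), m₁(λ) = (a(y-1)+1)²(-1+2a+a²(y-1)+y(c-1)) / ((a-1)²(a+c-1)²(-1+2a+c+a²(y-1))), and m₃(λ) = -(a(y-1)+1)² / ((a-1)²(-1+2a+c+a²(y-1))). Then 1 + 2yλ s(λ) + λ² y m₁(λ) + a c m₃(λ) = (1-a-c)(1+a(y-1))² / ((a-1)(-1+2a+c+a²(y-1))). -/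

import Mathlib

theorem Delta_formula (y c a : ℝ) (hy : 0 < y) (hy1 : y < 1) (hc : 0 < c)
    (ha1 : a ≠ 1) (ha3 : a + c - 1 ≠ 0) (ha2 : a - 1 - a*y ≠ 0)
    (ha4 : -1 + 2*a + c + a^2*(y-1) ≠ 0) :
    1 + 2*y*(a*(a-1+c)/(a-1-a*y)) * ((a*(y-1)+1) / ((a-1)*(a+c-1)))
      + (a*(a-1+c)/(a-1-a*y))^2 * y *
          ((a*(y-1)+1)^2 * (-1+2*a+a^2*(y-1)+y*(c-1))
            / ((a-1)^2*(a+c-1)^2*(-1+2*a+c+a^2*(y-1))))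
      + a*c * (-(a*(y-1)+1)^2 / ((a-1)^2*(-1+2*a+c+a^2*(y-1))))
    = (1-a-c)*(1+a*(y-1))^2 / ((a-1)*(-1+2*a+c+a^2*(y-1))) := by
  have h1 : a - 1 ≠ 0 := sub_ne_zero.mpr ha1
  have h2 : a - 1 - y*a ≠ 0 := by rwa [mul_comm]
  field_simp
  ring
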